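/- arXiv:1306.0857 — 4 statements merged into one kernel-verified Lean document; each statement's English description precedes it below -/
import Mathlib

section
/- With the notation of the previous statement, if additionally ∑_{l∈I} |c_l|·l² < ∞, then Λ(y,x) = 1 + ∑_{l∈I} c_l T_l(y) cos(lx) is twice continuously differentiable and satisfies the hyperbolic PDE (1/2)∂ₓₓΛ(y,x) = (1/2)(−y ∂ᵧΛ(y,x) + (1−y²) ∂ᵧᵧΛ(y,x)) for all (y,x) ∈ (−1,1) × ℝ. -/
open Real MeasureTheory

private lemma aux_cos_bound (k : ℕ) (hk : k ≤ 2) (θ : ℝ) :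
    ‖iteratedFDeriv ℝ k Real.cos θ‖ ≤ 1 := by
  rw [norm_iteratedFDeriv_eq_norm_iteratedDeriv]
  interval_cases k
  · simpa using Real.abs_cos_le_one θ
  · rw [iteratedDeriv_one, Real.deriv_cos']
    simpa using Real.abs_sin_le_one θ
  · have h2 : iteratedDeriv 2 Real.cos = fun x => -Real.cos x := by
      funext x
      rw [iteratedDeriv_succ, iteratedDeriv_one, Real.deriv_cos']
      exact ((Real.hasDerivAt_sin x).neg).deriv
    rw [h2]
    simpa using Real.abs_cos_le_one θ

private lemma aux_scaled_cos_bound (a : ℝ) (M : ℝ × ℝ →L[ℝ] ℝ) (k : ℕ) (hk : k ≤ 2)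
    (p : ℝ × ℝ) : ‖iteratedFDeriv ℝ k (fun q => a * Real.cos (M q)) p‖ ≤ |a| * ‖M‖ ^ k := by
  have h1 : (fun q => a * Real.cos (M q)) = a • (Real.cos ∘ M) := rfl
  rw [h1, iteratedFDeriv_const_smul_apply ((Real.contDiff_cos (n := (k : WithTop ℕ∞))).comp
      (M.contDiff)).contDiffAt, norm_smul a (iteratedFDeriv ℝ k (Real.cos ∘ ⇑M) p), Real.norm_eq_abs]
  gcongr
  rw [ContinuousLinearMap.iteratedFDeriv_comp_right M (Real.contDiff_cos (n := ⊤)) p le_top]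
  calc ‖(iteratedFDeriv ℝ k Real.cos (M p)).compContinuousLinearMap fun _ => M‖
      ≤ ‖iteratedFDeriv ℝ k Real.cos (M p)‖ * ∏ _i : Fin k, ‖M‖ :=
        ContinuousMultilinearMap.norm_compContinuousLinearMap_le _ _
    _ ≤ 1 * ‖M‖ ^ k := by
        rw [Finset.prod_const, Finset.card_univ, Fintype.card_fin]
        gcongr
        exact aux_cos_bound k hk (M p)
    _ = ‖M‖ ^ k := one_mul _

private lemma aux_pow_bound (l : ℝ) (hl : 0 ≤ l) (k : ℕ) (hk : k ≤ 2) (m : ℝ)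
    (h0 : 0 ≤ m) (hM : m ≤ 2 * l) : m ^ k ≤ 4 * (1 + l ^ 2) := by
  have := pow_le_pow_left₀ h0 hM k
  refine this.trans ?_
  interval_cases k <;> nlinarith [sq_nonneg (l - 1)]

private lemma aux_phi (I : Set ℕ) (c : ℕ → ℝ)
    (hsum : Summable fun l : I => |c l|)
    (hsum2 : Summable fun l : I => |c l| * (l : ℝ) ^ 2) :
    ContDiff ℝ 2 (fun p : ℝ × ℝ =>
      ∑' l : I, c l * Real.cos (l * p.1) * Real.cos (l * p.2)) := by
  set L₁ : ℝ × ℝ →L[ℝ] ℝ := ContinuousLinearMap.fst ℝ ℝ ℝ + ContinuousLinearMap.snd ℝ ℝ ℝ with hL₁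
  set L₂ : ℝ × ℝ →L[ℝ] ℝ := ContinuousLinearMap.fst ℝ ℝ ℝ - ContinuousLinearMap.snd ℝ ℝ ℝ with hL₂
  have hL₁n : ‖L₁‖ ≤ 2 := by
    refine ContinuousLinearMap.opNorm_le_bound _ (by norm_num) fun p => ?_
    have := norm_fst_le p
    have := norm_snd_le p
    have hv : L₁ p = p.1 + p.2 := rfl
    rw [hv]
    calc ‖p.1 + p.2‖ ≤ ‖p.1‖ + ‖p.2‖ := norm_add_le _ _
      _ ≤ 2 * ‖p‖ := by linarith
  have hL₂n : ‖L₂‖ ≤ 2 := by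
    refine ContinuousLinearMap.opNorm_le_bound _ (by norm_num) fun p => ?_
    have := norm_fst_le p
    have := norm_snd_le p
    have hv : L₂ p = p.1 - p.2 := rfl
    rw [hv]
    calc ‖p.1 - p.2‖ ≤ ‖p.1‖ + ‖p.2‖ := norm_sub_le _ _
      _ ≤ 2 * ‖p‖ := by linarith
  set A : I → (ℝ × ℝ →L[ℝ] ℝ) := fun l => ((l : ℕ) : ℝ) • L₁ with hA
  set B : I → (ℝ × ℝ →L[ℝ] ℝ) := fun l => ((l : ℕ) : ℝ) • L₂ with hB
  have hAn : ∀ l : I, ‖A l‖ ≤ 2 * ((l : ℕ) : ℝ) := by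
    intro l
    have hv : A l = ((l:ℕ):ℝ) • L₁ := rfl
    rw [hv, norm_smul ((l:ℕ):ℝ) L₁, Real.norm_eq_abs, abs_of_nonneg (by positivity)]
    calc ((l:ℕ):ℝ) * ‖L₁‖ ≤ ((l:ℕ):ℝ) * 2 := by gcongr
      _ = 2 * ((l:ℕ):ℝ) := mul_comm _ _
  have hBn : ∀ l : I, ‖B l‖ ≤ 2 * ((l : ℕ) : ℝ) := by
    intro l
    have hv : B l = ((l:ℕ):ℝ) • L₂ := rfl
    rw [hv, norm_smul ((l:ℕ):ℝ) L₂, Real.norm_eq_abs, abs_of_nonneg (by positivity)]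
    calc ((l:ℕ):ℝ) * ‖L₂‖ ≤ ((l:ℕ):ℝ) * 2 := by gcongr
      _ = 2 * ((l:ℕ):ℝ) := mul_comm _ _
  set f : I → ℝ × ℝ → ℝ :=
    fun l p => (c l / 2) * Real.cos (A l p) + (c l / 2) * Real.cos (B l p) with hfdef
  have hf : ∀ l, ContDiff ℝ 2 (f l) :=
    fun l => (contDiff_const.mul (Real.contDiff_cos.comp (A l).contDiff)).add
      (contDiff_const.mul (Real.contDiff_cos.comp (B l).contDiff))
  have key : (fun p : ℝ × ℝ => ∑' l : I, c l * Real.cos (l * p.1) * Real.cos (l * p.2))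
      = fun p => ∑' l : I, f l p := by
    funext p
    refine tsum_congr fun l => ?_
    have hAp : A l p = ((l:ℕ):ℝ) * p.1 + ((l:ℕ):ℝ) * p.2 := by
      show ((l:ℕ):ℝ) * (p.1 + p.2) = _
      ring
    have hBp : B l p = ((l:ℕ):ℝ) * p.1 - ((l:ℕ):ℝ) * p.2 := by
      show ((l:ℕ):ℝ) * (p.1 - p.2) = _
      ring
    show _ = (c l / 2) * Real.cos (A l p) + (c l / 2) * Real.cos (B l p)
    rw [hAp, hBp, Real.cos_add, Real.cos_sub]
    ring
  rw [key]
  have hbound : ∀ (k : ℕ) (l : I) (p : ℝ × ℝ), k ≤ 2 →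
      ‖iteratedFDeriv ℝ k (f l) p‖ ≤ 4 * |c l| * (1 + ((l:ℕ):ℝ) ^ 2) := by
    intro k l p hk
    have h1 : f l = (fun q => (c l / 2) * Real.cos (A l q))
        + (fun q => (c l / 2) * Real.cos (B l q)) := rfl
    have hcA : ContDiff ℝ (k : WithTop ℕ∞) fun q => (c l / 2) * Real.cos (A l q) :=
      (contDiff_const.mul (Real.contDiff_cos.comp (A l).contDiff))
    have hcB : ContDiff ℝ (k : WithTop ℕ∞) fun q => (c l / 2) * Real.cos (B l q) :=
      (contDiff_const.mul (Real.contDiff_cos.comp (B l).contDiff))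
    rw [h1, iteratedFDeriv_add_apply hcA.contDiffAt hcB.contDiffAt]
    have h0l : (0:ℝ) ≤ ((l:ℕ):ℝ) := by positivity
    calc ‖iteratedFDeriv ℝ k (fun q => c l / 2 * Real.cos ((A l) q)) p
          + iteratedFDeriv ℝ k (fun q => c l / 2 * Real.cos ((B l) q)) p‖
        ≤ ‖iteratedFDeriv ℝ k (fun q => c l / 2 * Real.cos ((A l) q)) p‖
          + ‖iteratedFDeriv ℝ k (fun q => c l / 2 * Real.cos ((B l) q)) p‖ := norm_add_le _ _
      _ ≤ |c l / 2| * ‖A l‖ ^ k + |c l / 2| * ‖B l‖ ^ k := by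
          gcongr
          · exact aux_scaled_cos_bound _ _ k hk p
          · exact aux_scaled_cos_bound _ _ k hk p
      _ ≤ |c l / 2| * (4 * (1 + ((l:ℕ):ℝ) ^ 2)) + |c l / 2| * (4 * (1 + ((l:ℕ):ℝ) ^ 2)) := by
          gcongr
          · exact aux_pow_bound _ h0l k hk _ (norm_nonneg _) (hAn l)
          · exact aux_pow_bound _ h0l k hk _ (norm_nonneg _) (hBn l)
      _ = 4 * |c l| * (1 + ((l:ℕ):ℝ) ^ 2) := by
          rw [abs_div]
          simp only [abs_two]
          ring
  have hv : Summable fun l : I => 4 * |c l| * (1 + ((l:ℕ):ℝ) ^ 2) := by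
    have h := (hsum.add hsum2).mul_left 4
    exact h.congr fun l => by push_cast; ring
  exact contDiff_tsum (fun l => hf l) (fun k _ => hv)
    (fun k l p hk => hbound k l p (by exact_mod_cast hk))

section DerivAux

variable {I : Set ℕ} {c : ℕ → ℝ}

private lemma aux_summable_l (hsum : Summable fun l : I => |c l|)
    (hsum2 : Summable fun l : I => |c l| * (l : ℝ) ^ 2) :
    Summable fun l : I => |c l| * ((l:ℕ):ℝ) := by
  refine Summable.of_nonneg_of_le (fun l => by positivity) (fun l => ?_) (hsum.add hsum2)
  have h0 : (0:ℝ) ≤ |c l| := abs_nonneg _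
  have h1 : ((l:ℕ):ℝ) ≤ 1 + ((l:ℕ):ℝ)^2 := by nlinarith [sq_nonneg (((l:ℕ):ℝ) - 1)]
  calc |c l| * ((l:ℕ):ℝ) ≤ |c l| * (1 + ((l:ℕ):ℝ)^2) := by gcongr
    _ = |c l| + |c l| * ((l:ℕ):ℝ)^2 := by ring

private lemma aux_hasDerivAt1 (hsum : Summable fun l : I => |c l|)
    (hsum2 : Summable fun l : I => |c l| * (l : ℝ) ^ 2)
    (b : I → ℝ) (hb : ∀ l, |b l| ≤ 1) (θ : ℝ) :
    HasDerivAt (fun t => ∑' l : I, c l * b l * Real.cos (l * t))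
      (∑' l : I, c l * b l * (-(((l:ℕ):ℝ) * Real.sin (l * θ)))) θ := by
  have hg : ∀ (l : I) (t : ℝ), HasDerivAt (fun t => c l * b l * Real.cos (l * t))
      (c l * b l * (-(((l:ℕ):ℝ) * Real.sin (l * t)))) t := by
    intro l t
    have h := (((hasDerivAt_id' t).const_mul ((l:ℕ):ℝ)).cos).const_mul (c l * b l)
    refine h.congr_deriv ?_
    ring
  have hg' : ∀ (l : I) (t : ℝ), ‖c l * b l * (-(((l:ℕ):ℝ) * Real.sin (l * t)))‖
      ≤ |c l| * ((l:ℕ):ℝ) := by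
    intro l t
    rw [Real.norm_eq_abs, abs_mul, abs_neg, abs_mul, abs_mul, Nat.abs_cast]
    calc |c l| * |b l| * (((l:ℕ):ℝ) * |Real.sin (l * t)|)
        ≤ |c l| * 1 * (((l:ℕ):ℝ) * 1) := by
          gcongr
          · exact hb l
          · exact Real.abs_sin_le_one _
      _ = |c l| * ((l:ℕ):ℝ) := by ring
  have hg0 : Summable fun l : I => c l * b l * Real.cos (l * 0) := by
    refine Summable.of_norm_bounded hsum fun l => ?_
    rw [Real.norm_eq_abs, abs_mul, abs_mul]
    calc |c l| * |b l| * |Real.cos (l * 0)|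
        ≤ |c l| * 1 * 1 := by
          gcongr
          · exact hb l
          · exact Real.abs_cos_le_one _
      _ = |c l| := by ring
  exact hasDerivAt_tsum (aux_summable_l hsum hsum2) hg hg' hg0 θ

private lemma aux_hasDerivAt2 (hsum : Summable fun l : I => |c l|)
    (hsum2 : Summable fun l : I => |c l| * (l : ℝ) ^ 2)
    (b : I → ℝ) (hb : ∀ l, |b l| ≤ 1) (θ : ℝ) :
    HasDerivAt (fun t => ∑' l : I, c l * b l * (-(((l:ℕ):ℝ) * Real.sin (l * t))))
      (∑' l : I, c l * b l * (-(((l:ℕ):ℝ) ^ 2 * Real.cos (l * θ)))) θ := by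
  have hsum2' : Summable fun l : I => |c l| * ((l:ℕ):ℝ) ^ 2 :=
    hsum2.congr fun l => by push_cast; ring
  have hg : ∀ (l : I) (t : ℝ), HasDerivAt (fun t => c l * b l * (-(((l:ℕ):ℝ) * Real.sin (l * t))))
      (c l * b l * (-(((l:ℕ):ℝ) ^ 2 * Real.cos (l * t)))) t := by
    intro l t
    have h := ((((hasDerivAt_id' t).const_mul ((l:ℕ):ℝ)).sin).const_mul ((l:ℕ):ℝ)).neg.const_mul
      (c l * b l)
    refine h.congr_deriv ?_
    ring
  have hg' : ∀ (l : I) (t : ℝ), ‖c l * b l * (-(((l:ℕ):ℝ) ^ 2 * Real.cos (l * t)))‖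
      ≤ |c l| * ((l:ℕ):ℝ) ^ 2 := by
    intro l t
    rw [Real.norm_eq_abs, abs_mul, abs_neg, abs_mul, abs_mul, abs_pow, Nat.abs_cast]
    calc |c l| * |b l| * (((l:ℕ):ℝ) ^ 2 * |Real.cos (l * t)|)
        ≤ |c l| * 1 * (((l:ℕ):ℝ) ^ 2 * 1) := by
          gcongr
          · exact hb l
          · exact Real.abs_cos_le_one _
      _ = |c l| * ((l:ℕ):ℝ) ^ 2 := by ring
  have hg0 : Summable fun l : I => c l * b l * (-(((l:ℕ):ℝ) * Real.sin (l * 0))) := by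
    refine Summable.of_norm_bounded (aux_summable_l hsum hsum2) fun l => ?_
    rw [Real.norm_eq_abs, abs_mul, abs_neg, abs_mul, abs_mul, Nat.abs_cast]
    calc |c l| * |b l| * (((l:ℕ):ℝ) * |Real.sin (l * 0)|)
        ≤ |c l| * 1 * (((l:ℕ):ℝ) * 1) := by
          gcongr
          · exact hb l
          · exact Real.abs_sin_le_one _
      _ = |c l| * ((l:ℕ):ℝ) := by ring
  exact hasDerivAt_tsum hsum2' hg hg' hg0 θ

end DerivAux

/-- Under the additional condition `∑ |c_l| l² < ∞`, the kernel
`Λ(y,x) = 1 + ∑ c_l T_l(y) cos(lx)` is twice continuously differentiable and satisfies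
`(1/2) ∂ₓₓΛ = (1/2)(-y ∂ᵧΛ + (1-y²) ∂ᵧᵧΛ)` on `(-1,1) × ℝ`. -/
theorem stmt_9 (T : ℕ → ℝ → ℝ)
    (hTcos : ∀ (l : ℕ) (θ : ℝ), T l (Real.cos θ) = Real.cos (l * θ))
    (hTode : ∀ l : ℕ, ∀ y ∈ Set.Icc (-1:ℝ) 1,
      -y * deriv (T l) y + (1 - y^2) * deriv (deriv (T l)) y = -(l:ℝ)^2 * T l y)
    (hTbd : ∀ l : ℕ, ∀ y ∈ Set.Icc (-1:ℝ) 1, |T l y| ≤ 1)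
    (I : Set ℕ) (hI : I.Countable) (hI0 : 0 ∉ I)
    (c : ℕ → ℝ) (hsum : Summable fun l : I => |c l|)
    (hc1 : (∑' l : I, |c l|) ≤ 1)
    (hsum2 : Summable fun l : I => |c l| * (l : ℝ)^2)
    (Λ : ℝ → ℝ → ℝ)
    (hΛ : ∀ y x : ℝ, Λ y x = 1 + ∑' l : I, c l * T l y * Real.cos (l * x)) :
    ContDiffOn ℝ 2 (fun q : ℝ × ℝ => Λ q.1 q.2) (Set.Ioo (-1:ℝ) 1 ×ˢ Set.univ)
    ∧ ∀ y ∈ Set.Ioo (-1:ℝ) 1, ∀ x : ℝ,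
        (1/2) * deriv (fun x' => deriv (fun x'' => Λ y x'') x') x
          = (1/2) * (-y * deriv (fun y' => Λ y' x) y
              + (1 - y^2) * deriv (fun y' => deriv (fun y'' => Λ y'' x) y') y) := by
  have hT : ∀ (l : ℕ) (y' : ℝ), y' ∈ Set.Icc (-1:ℝ) 1 →
      T l y' = Real.cos (l * Real.arccos y') := by
    intro l y' hy'
    have h := hTcos l (Real.arccos y')
    rwa [Real.cos_arccos hy'.1 hy'.2] at h
  constructor
  · -- smoothness
    have hΦ := aux_phi I c hsum hsum2
    have hcd : ContDiffOn ℝ 2 (fun q : ℝ × ℝ => 1 +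
        (fun p : ℝ × ℝ => ∑' l : I, c l * Real.cos (l * p.1) * Real.cos (l * p.2))
          (Real.arccos q.1, q.2)) (Set.Ioo (-1:ℝ) 1 ×ˢ Set.univ) := by
      intro q hq
      have hq1 : q.1 ∈ Set.Ioo (-1:ℝ) 1 := hq.1
      have h1 : q.1 ≠ -1 := ne_of_gt hq1.1
      have h2 : q.1 ≠ 1 := ne_of_lt hq1.2
      refine ContDiffAt.contDiffWithinAt ?_
      exact contDiffAt_const.add (hΦ.contDiffAt.comp q
        (((Real.contDiffAt_arccos h1 h2).comp q contDiffAt_fst).prodMk contDiffAt_snd))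
    refine hcd.congr fun q hq => ?_
    have hq1 : q.1 ∈ Set.Icc (-1:ℝ) 1 := Set.mem_Icc_of_Ioo hq.1
    rw [hΛ]
    congr 1
    exact tsum_congr fun l => by rw [hT l q.1 hq1]
  · -- the PDE
    intro y hy x
    have hyIcc : y ∈ Set.Icc (-1:ℝ) 1 := Set.mem_Icc_of_Ioo hy
    have hy2lt : y^2 < 1 := by nlinarith [hy.1, hy.2]
    have hspos : 0 < Real.sqrt (1 - y^2) := Real.sqrt_pos.mpr (by nlinarith)
    have hsne : Real.sqrt (1 - y^2) ≠ 0 := ne_of_gt hspos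
    have hs2 : Real.sqrt (1 - y^2) ^ 2 = 1 - y^2 := Real.sq_sqrt (by nlinarith)
    have bT : ∀ l : I, |T l y| ≤ 1 := fun l => hTbd l y hyIcc
    have bX : ∀ l : I, |Real.cos (l * x)| ≤ 1 := fun l => Real.abs_cos_le_one _
    -- x-direction
    have hx1 : ∀ x' : ℝ, HasDerivAt (fun x'' => Λ y x'')
        (∑' l : I, c l * T l y * (-(((l:ℕ):ℝ) * Real.sin (l * x')))) x' := by
      intro x'
      have h := (aux_hasDerivAt1 hsum hsum2 (fun l => T l y) bT x').const_add 1
      exact h.congr_of_eventuallyEq (Filter.Eventually.of_forall fun t => hΛ y t)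
    have hx2 : deriv (fun x' => deriv (fun x'' => Λ y x'') x') x
        = ∑' l : I, c l * T l y * (-(((l:ℕ):ℝ)^2 * Real.cos (l * x))) := by
      have he : (fun x'' => Λ y x'') =ᶠ[nhds x] (fun x'' => Λ y x'') := Filter.EventuallyEq.rfl
      have he2 : deriv (fun x'' => Λ y x'')
          = fun x' => ∑' l : I, c l * T l y * (-(((l:ℕ):ℝ) * Real.sin (l * x'))) :=
        funext fun x' => (hx1 x').deriv
      rw [he2]
      exact (aux_hasDerivAt2 hsum hsum2 (fun l => T l y) bT x).deriv
    -- y-direction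
    have hEq : ∀ y' ∈ Set.Ioo (-1:ℝ) 1, Λ y' x
        = 1 + ∑' l : I, c l * Real.cos (l * x) * Real.cos (l * Real.arccos y') := by
      intro y' hy'
      rw [hΛ]
      congr 1
      exact tsum_congr fun l => by
        rw [hT l y' (Set.mem_Icc_of_Ioo hy')]; ring
    have hyd1 : ∀ y' ∈ Set.Ioo (-1:ℝ) 1, HasDerivAt (fun y'' => Λ y'' x)
        ((∑' l : I, c l * Real.cos (l * x) * (-(((l:ℕ):ℝ) * Real.sin (l * Real.arccos y'))))
          * (-(1 / Real.sqrt (1 - y'^2)))) y' := by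
      intro y' hy'
      have harc := Real.hasDerivAt_arccos (ne_of_gt hy'.1) (ne_of_lt hy'.2)
      have hcomp := (aux_hasDerivAt1 hsum hsum2 (fun l => Real.cos (l*x)) bX
        (Real.arccos y')).comp y' harc
      have h2 := hcomp.const_add 1
      refine h2.congr_of_eventuallyEq ?_
      filter_upwards [Ioo_mem_nhds hy'.1 hy'.2] with z hz
      exact hEq z hz
    have hyd1' : deriv (fun y'' => Λ y'' x) =ᶠ[nhds y] fun y' =>
        (∑' l : I, c l * Real.cos (l * x) * (-(((l:ℕ):ℝ) * Real.sin (l * Real.arccos y'))))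
          * (-(1 / Real.sqrt (1 - y'^2))) := by
      filter_upwards [Ioo_mem_nhds hy.1 hy.2] with z hz using (hyd1 z hz).deriv
    have hu : HasDerivAt (fun y' =>
        ∑' l : I, c l * Real.cos (l * x) * (-(((l:ℕ):ℝ) * Real.sin (l * Real.arccos y'))))
        ((∑' l : I, c l * Real.cos (l * x) * (-(((l:ℕ):ℝ)^2 * Real.cos (l * Real.arccos y))))
          * (-(1 / Real.sqrt (1 - y^2)))) y :=
      (aux_hasDerivAt2 hsum hsum2 (fun l => Real.cos (l*x)) bX (Real.arccos y)).comp y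
        (Real.hasDerivAt_arccos (ne_of_gt hy.1) (ne_of_lt hy.2))
    have hpoly : HasDerivAt (fun y' : ℝ => 1 - y'^2) (-(2*y)) y := by
      have h := (hasDerivAt_pow 2 y).const_sub 1
      refine h.congr_deriv ?_
      norm_num
    have hsq : HasDerivAt (fun y' : ℝ => Real.sqrt (1 - y'^2))
        (1/(2*Real.sqrt (1 - y^2)) * (-(2*y))) y :=
      (Real.hasDerivAt_sqrt (by nlinarith)).comp y hpoly
    have hqi := (hsq.inv hsne).neg
    have hq : HasDerivAt (fun y' : ℝ => -(1 / Real.sqrt (1 - y'^2)))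
        (-(-(1/(2*Real.sqrt (1 - y^2)) * (-(2*y))) / (Real.sqrt (1 - y^2))^2)) y := by
      refine hqi.congr_of_eventuallyEq (Filter.Eventually.of_forall fun z => ?_)
      simp [one_div]
    have hy2d : deriv (fun y' => deriv (fun y'' => Λ y'' x) y') y
        = (∑' l : I, c l * Real.cos (l * x) * (-(((l:ℕ):ℝ)^2 * Real.cos (l * Real.arccos y))))
          * (-(1 / Real.sqrt (1 - y^2))) * (-(1 / Real.sqrt (1 - y^2)))
          + (∑' l : I, c l * Real.cos (l * x) * (-(((l:ℕ):ℝ) * Real.sin (l * Real.arccos y))))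
          * (-(-(1/(2*Real.sqrt (1 - y^2)) * (-(2*y))) / (Real.sqrt (1 - y^2))^2)) := by
      rw [Filter.EventuallyEq.deriv_eq hyd1']
      exact (hu.mul hq).deriv
    rw [hx2, (hyd1 y hy).deriv, hy2d]
    have hPG : (∑' l : I, c l * T l y * (-(((l:ℕ):ℝ)^2 * Real.cos (l * x))))
        = ∑' l : I, c l * Real.cos (l * x) * (-(((l:ℕ):ℝ)^2 * Real.cos (l * Real.arccos y))) :=
      tsum_congr fun l => by rw [hT l y hyIcc]; ring
    rw [hPG]
    rw [show (1:ℝ) - y^2 = Real.sqrt (1 - y^2)^2 from hs2.symm]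
    generalize (∑' l : I, c l * Real.cos (l * x)
      * (-(((l:ℕ):ℝ)^2 * Real.cos (l * Real.arccos y)))) = G2
    generalize (∑' l : I, c l * Real.cos (l * x)
      * (-(((l:ℕ):ℝ) * Real.sin (l * Real.arccos y)))) = G1
    simp only [Real.sqrt_sq hspos.le]
    field_simp
    ring
end

section
/- Fix N ≥ 2 and 1 ≤ M < N. The Dixon–Anderson kernel Λ(y,x) = M! · ∏_{1≤i<m≤M}(x_m − x_i) · ∏_{1≤j<n≤M+1}(y_n − y_j)^{−1}, defined for y₁ < y₂ < … < y_{M+1} and x in the polytope D(y) = {x : y_i ≤ x_i ≤ y_{i+1} for i = 1,…,M}, is a probability density on D(y) for each fixed y: it is nonnegative on D(y) and ∫_{D(y)} Λ(y,x) dx = 1. -/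
open Real MeasureTheory Finset

lemma aux_pairs {n : ℕ} (g : Fin n → Fin n → ℝ) :
    ∏ p ∈ Finset.univ.filter (fun p : Fin n × Fin n => p.1 < p.2), g p.1 p.2
      = ∏ i, ∏ j ∈ Finset.Ioi i, g i j := by
  rw [← Finset.prod_sigma (Finset.univ) (fun i => Finset.Ioi i) (fun p => g p.1 p.2)]
  refine Finset.prod_nbij' (fun p => ⟨p.1, p.2⟩) (fun p => (p.1, p.2)) ?_ ?_ ?_ ?_ ?_ <;>
    simp [Finset.mem_sigma, Finset.mem_filter]

lemma aux_box {n : ℕ} (a b : Fin n → ℝ) (f : Fin n → ℝ → ℝ) :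
    ∫ x in Set.univ.pi (fun i => Set.Icc (a i) (b i)), ∏ i, f i (x i)
      = ∏ i, ∫ t in Set.Icc (a i) (b i), f i t := by
  have hmeas : MeasurableSet (Set.univ.pi (fun i => Set.Icc (a i) (b i))) :=
    MeasurableSet.univ_pi (fun i => measurableSet_Icc)
  rw [← integral_indicator hmeas]
  have : (Set.univ.pi (fun i => Set.Icc (a i) (b i))).indicator (fun x => ∏ i, f i (x i))
      = fun x => ∏ i, (Set.Icc (a i) (b i)).indicator (f i) (x i) := by
    funext x
    by_cases hx : x ∈ Set.univ.pi (fun i => Set.Icc (a i) (b i))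
    · rw [Set.indicator_of_mem hx]
      refine Finset.prod_congr rfl fun i _ => ?_
      rw [Set.indicator_of_mem (hx i (Set.mem_univ i))]
    · rw [Set.indicator_of_notMem hx]
      rw [Set.mem_univ_pi] at hx; push_neg at hx; obtain ⟨i, hi⟩ := hx
      exact (Finset.prod_eq_zero (Finset.mem_univ i)
        (Set.indicator_of_notMem hi _)).symm
  rw [this, MeasureTheory.integral_fintype_prod_volume_eq_prod
    (f := fun i => (Set.Icc (a i) (b i)).indicator (f i))]
  refine Finset.prod_congr rfl fun i _ => ?_
  rw [integral_indicator measurableSet_Icc]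

lemma aux_mono (a b : ℝ) (hab : a ≤ b) (e : ℕ) :
    ∫ t in Set.Icc a b, t ^ e = (b ^ (e+1) - a ^ (e+1)) / (e+1) := by
  rw [MeasureTheory.integral_Icc_eq_integral_Ioc,
    ← intervalIntegral.integral_of_le hab, integral_pow]

lemma aux_detB {m : ℕ} (y : Fin (m+1) → ℝ) :
    Matrix.det (Matrix.of fun i j : Fin m =>
        y i.succ ^ ((j:ℕ)+1) - y i.castSucc ^ ((j:ℕ)+1))
      = ∏ i, ∏ j ∈ Finset.Ioi i, (y j - y i) := by
  rw [← Matrix.det_vandermonde y]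
  set C' : Matrix (Fin (m+1)) (Fin (m+1)) ℝ := Matrix.of fun i j =>
    Fin.cases ((Matrix.vandermonde y) 0 j)
      (fun i' : Fin m => y i'.succ ^ (j:ℕ) - y i'.castSucc ^ (j:ℕ)) i with hC'
  have h1 : (Matrix.vandermonde y).det = C'.det := by
    refine Matrix.det_eq_of_forall_row_eq_smul_add_pred (fun _ => 1) (fun j => rfl) ?_
    intro i j
    simp only [hC', Matrix.of_apply, Fin.cases_succ, Matrix.vandermonde_apply, one_mul]
    ring
  rw [h1, Matrix.det_succ_column_zero]
  rw [Finset.sum_eq_single 0]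
  · simp only [hC', Matrix.of_apply, Fin.cases_zero, Matrix.vandermonde_apply]
    simp only [Fin.val_zero, pow_zero, one_smul, one_mul]
    congr 1
  · intro i _ hi
    obtain ⟨i', rfl⟩ := Fin.exists_succ_eq.mpr hi
    simp [hC']
  · simp

lemma aux_vdm {m : ℕ} (x : Fin m → ℝ) :
    ∏ i, ∏ j ∈ Finset.Ioi i, (x j - x i)
      = ∑ σ : Equiv.Perm (Fin m), (Equiv.Perm.sign σ : ℝ) * ∏ i, x i ^ ((σ i : Fin m) : ℕ) := by
  rw [← Matrix.det_vandermonde x, Matrix.det_apply']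
  rw [← Equiv.sum_comp (Equiv.inv (Equiv.Perm (Fin m)))]
  refine Finset.sum_congr rfl fun σ _ => ?_
  simp only [Equiv.inv_apply, Equiv.Perm.sign_inv]
  congr 1
  rw [show (∏ i, Matrix.vandermonde x (σ⁻¹ i) i)
      = ∏ i, (fun k => Matrix.vandermonde x (σ⁻¹ k) k) (σ i) from
    (Equiv.prod_comp σ _).symm]
  refine Finset.prod_congr rfl fun i _ => ?_
  simp [Matrix.vandermonde_apply]

lemma aux_int {m : ℕ} (y : Fin (m+1) → ℝ) (hy : Monotone y) :
    ∫ x in Set.univ.pi (fun i : Fin m => Set.Icc (y i.castSucc) (y i.succ)),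
        ∏ i, ∏ j ∈ Finset.Ioi i, (x j - x i)
      = (∏ i, ∏ j ∈ Finset.Ioi i, (y j - y i)) / (m.factorial : ℝ) := by
  set D := Set.univ.pi (fun i : Fin m => Set.Icc (y i.castSucc) (y i.succ)) with hDdef
  have hDc : IsCompact D := isCompact_univ_pi (fun i => isCompact_Icc)
  have hint : ∀ σ : Equiv.Perm (Fin m),
      IntegrableOn (fun x : Fin m → ℝ => (Equiv.Perm.sign σ : ℝ) * ∏ i, x i ^ ((σ i : Fin m) : ℕ)) D := by
    intro σ
    refine ContinuousOn.integrableOn_compact hDc ?_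
    exact (Continuous.continuousOn (by continuity))
  have h1 : ∫ x in D, ∏ i, ∏ j ∈ Finset.Ioi i, (x j - x i)
      = ∑ σ : Equiv.Perm (Fin m), (Equiv.Perm.sign σ : ℝ) * ∫ x in D, ∏ i, x i ^ ((σ i : Fin m) : ℕ) := by
    rw [show (fun x : Fin m → ℝ => ∏ i, ∏ j ∈ Finset.Ioi i, (x j - x i))
        = fun x => ∑ σ : Equiv.Perm (Fin m), (Equiv.Perm.sign σ : ℝ) * ∏ i, x i ^ ((σ i : Fin m) : ℕ) from
      funext fun x => aux_vdm x]
    rw [integral_finset_sum _ (fun σ _ => hint σ)]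
    exact Finset.sum_congr rfl fun σ _ => integral_const_mul _ _
  -- the matrix of moments
  set A : Matrix (Fin m) (Fin m) ℝ :=
    Matrix.of fun i j => ∫ t in Set.Icc (y i.castSucc) (y i.succ), t ^ (j:ℕ) with hA
  have h2 : ∀ σ : Equiv.Perm (Fin m),
      ∫ x in D, ∏ i, x i ^ ((σ i : Fin m) : ℕ) = ∏ i, A i (σ i) := by
    intro σ
    rw [hDdef, aux_box (fun i => y i.castSucc) (fun i => y i.succ) (fun i t => t ^ ((σ i : Fin m) : ℕ))]
    exact Finset.prod_congr rfl fun i _ => rfl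
  have h3 : ∫ x in D, ∏ i, ∏ j ∈ Finset.Ioi i, (x j - x i) = A.transpose.det := by
    rw [h1, Matrix.det_apply']
    refine Finset.sum_congr rfl fun σ _ => ?_
    rw [h2 σ]
    simp [Matrix.transpose_apply]
  rw [h3, Matrix.det_transpose]
  have hAval : A = Matrix.of fun i j : Fin m =>
      ((j:ℝ)+1)⁻¹ * (y i.succ ^ ((j:ℕ)+1) - y i.castSucc ^ ((j:ℕ)+1)) := by
    ext i j
    rw [hA]
    simp only [Matrix.of_apply]
    rw [aux_mono _ _ (hy (Fin.castSucc_le_succ i)) (j:ℕ)]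
    push_cast
    ring
  rw [hAval, Matrix.det_mul_row (fun j : Fin m => ((j:ℝ)+1)⁻¹)
    (fun i j : Fin m => y i.succ ^ ((j:ℕ)+1) - y i.castSucc ^ ((j:ℕ)+1))]
  rw [show (fun i j : Fin m => y i.succ ^ ((j:ℕ)+1) - y i.castSucc ^ ((j:ℕ)+1))
      = Matrix.of fun i j : Fin m => y i.succ ^ ((j:ℕ)+1) - y i.castSucc ^ ((j:ℕ)+1) from rfl,
    aux_detB]
  have : ∏ j : Fin m, ((j:ℝ)+1)⁻¹ = ((m.factorial : ℝ))⁻¹ := by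
    rw [Finset.prod_inv_distrib]
    congr 1
    rw [Fin.prod_univ_eq_prod_range (fun j => ((j:ℝ)+1))]
    rw_mod_cast [Finset.prod_range_add_one_eq_factorial]
  rw [this, inv_mul_eq_div]

/-- The Dixon–Anderson kernel is a probability density on the interlacing polytope
`D(y) = [y₁,y₂] × ⋯ × [y_M, y_{M+1}]` for each strictly increasing `y`. -/
theorem stmt_12 (N M : ℕ) (hN : 2 ≤ N) (hM : 1 ≤ M) (hMN : M < N)
    (y : Fin (M+1) → ℝ) (hy : StrictMono y)
    (Λ : (Fin M → ℝ) → ℝ)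
    (hΛ : ∀ x : Fin M → ℝ, Λ x = (M.factorial : ℝ)
      * (∏ p ∈ Finset.univ.filter (fun p : Fin M × Fin M => p.1 < p.2),
          (x p.2 - x p.1))
      * (∏ p ∈ Finset.univ.filter (fun p : Fin (M+1) × Fin (M+1) => p.1 < p.2),
          (y p.2 - y p.1))⁻¹)
    (D : Set (Fin M → ℝ))
    (hD : D = Set.univ.pi fun i : Fin M => Set.Icc (y i.castSucc) (y i.succ)) :
    (∀ x ∈ D, 0 ≤ Λ x) ∧ ∫ x in D, Λ x = 1 := by
  set P : ℝ := ∏ p ∈ Finset.univ.filter (fun p : Fin (M+1) × Fin (M+1) => p.1 < p.2),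
      (y p.2 - y p.1) with hP
  have hPpos : 0 < P := by
    refine Finset.prod_pos fun p hp => ?_
    rw [Finset.mem_filter] at hp
    exact sub_pos.mpr (hy hp.2)
  constructor
  · intro x hx
    rw [hΛ]
    have h1 : 0 ≤ ∏ p ∈ Finset.univ.filter (fun p : Fin M × Fin M => p.1 < p.2),
        (x p.2 - x p.1) := by
      refine Finset.prod_nonneg fun p hp => ?_
      rw [Finset.mem_filter] at hp
      rw [hD] at hx
      have h2 := (hx p.1 (Set.mem_univ _)).2
      have h3 := (hx p.2 (Set.mem_univ _)).1
      have h4 : y p.1.succ ≤ y p.2.castSucc :=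
        hy.monotone (Fin.succ_le_castSucc_iff.mpr hp.2)
      linarith
    have := hPpos
    positivity
  · have hfun : Λ = fun x => ((M.factorial : ℝ) * P⁻¹)
        * ∏ i, ∏ j ∈ Finset.Ioi i, (x j - x i) := by
      funext x
      rw [hΛ, aux_pairs (fun i j => x j - x i)]
      ring
    rw [hfun, MeasureTheory.integral_const_mul, hD,
      aux_int y hy.monotone, ← aux_pairs (fun i j => y j - y i), ← hP]
    have hf : (M.factorial : ℝ) ≠ 0 := Nat.cast_ne_zero.mpr M.factorial_ne_zero
    field_simp
end

section
/- The Dixon–Anderson kernel Λ(y,x) = M! ∏_{1≤i<m≤M}(x_m−x_i) ∏_{1≤j<n≤M+1}(y_n−y_j)^{−1} satisfies, pointwise on the open set {y₁<…<y_{M+1}, y_i < x_i < y_{i+1}}, both (A^X)*Λ = 0 and A^Y Λ = 0, where A^X f = (1/2)Δₓf + ∑_{i=1}^M (∑_{i'≠i} 1/(x_i−x_{i'})) ∂_{x_i}f is the generator of an M-dimensional Dyson Brownian motion (with (A^X)* its formal adjoint), and A^Y g = (1/2)Δ_y g + ∑_{j=1}^{M+1} (∑_{j'≠j} 1/(y_j−y_{j'}))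 ∂_{y_j}g is the generator of an (M+1)-dimensional Dyson Brownian motion. -/
open Real MeasureTheory

/-- Partial derivative of a function on `Fin n → ℝ` in the `i`-th coordinate. -/
noncomputable def pd {n : ℕ} (i : Fin n) (F : (Fin n → ℝ) → ℝ) : (Fin n → ℝ) → ℝ :=
  fun x => deriv (fun s => F (Function.update x i s)) (x i)

open Finset

open Finset

noncomputable def qq {n : ℕ} (z : Fin n → ℝ) (t : Finset (Fin n)) (s : ℝ) : ℝ :=
  ∏ j ∈ t, (s - z j)

noncomputable def qq1 {n : ℕ} (z : Fin n → ℝ) (t : Finset (Fin n)) (s : ℝ) : ℝ :=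
  ∑ j ∈ t, ∏ k ∈ t.erase j, (s - z k)

noncomputable def qq2 {n : ℕ} (z : Fin n → ℝ) (t : Finset (Fin n)) (s : ℝ) : ℝ :=
  ∑ j ∈ t, ∑ k ∈ (t.erase j), ∏ l ∈ (t.erase j).erase k, (s - z l)

lemma hasDerivAt_qq {n : ℕ} (z : Fin n → ℝ) (t : Finset (Fin n)) (s : ℝ) :
    HasDerivAt (qq z t) (qq1 z t s) s := by
  have h : ∀ j ∈ t, HasDerivAt (fun u : ℝ => u - z j) (1 : ℝ) s := fun j _ =>
    (hasDerivAt_id s).sub_const (z j)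
  have := HasDerivAt.fun_finsetProd h
  show HasDerivAt (fun x => ∏ i ∈ t, (x - z i)) (qq1 z t s) s
  simpa [qq1] using this

lemma hasDerivAt_qq1 {n : ℕ} (z : Fin n → ℝ) (t : Finset (Fin n)) (s : ℝ) :
    HasDerivAt (qq1 z t) (qq2 z t s) s := by
  apply HasDerivAt.fun_sum
  intro j hj
  have h : ∀ k ∈ t.erase j, HasDerivAt (fun u : ℝ => u - z k) (1 : ℝ) s := fun k _ =>
    (hasDerivAt_id s).sub_const (z k)
  have := HasDerivAt.fun_finsetProd h
  simpa using this

lemma qq_ne_zero {n : ℕ} {z : Fin n → ℝ} {t : Finset (Fin n)} {s : ℝ}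
    (hs : ∀ j ∈ t, s ≠ z j) : qq z t s ≠ 0 :=
  Finset.prod_ne_zero_iff.2 fun j hj => sub_ne_zero.2 (hs j hj)

lemma prod_erase_eval {n : ℕ} {z : Fin n → ℝ} {t : Finset (Fin n)} {s : ℝ}
    (hs : ∀ j ∈ t, s ≠ z j) {j : Fin n} (hj : j ∈ t) :
    ∏ k ∈ t.erase j, (s - z k) = qq z t s * (s - z j)⁻¹ := by
  have h := Finset.prod_erase_mul t (fun k => s - z k) hj
  have hne : s - z j ≠ 0 := sub_ne_zero.2 (hs j hj)
  field_simp [qq]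
  simp only [qq]
  linear_combination h

lemma qq1_eval {n : ℕ} {z : Fin n → ℝ} {t : Finset (Fin n)} {s : ℝ}
    (hs : ∀ j ∈ t, s ≠ z j) :
    qq1 z t s = qq z t s * ∑ j ∈ t, (s - z j)⁻¹ := by
  rw [qq1, Finset.mul_sum]
  exact Finset.sum_congr rfl fun j hj => prod_erase_eval hs hj

lemma qq2_eval {n : ℕ} {z : Fin n → ℝ} {t : Finset (Fin n)} {s : ℝ}
    (hs : ∀ j ∈ t, s ≠ z j) :
    qq2 z t s = qq z t s *
      ((∑ j ∈ t, (s - z j)⁻¹)^2 - ∑ j ∈ t, ((s - z j)⁻¹)^2) := by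
  have hstep : ∀ j ∈ t, ∑ k ∈ (t.erase j), ∏ l ∈ (t.erase j).erase k, (s - z l)
      = qq z t s * ((s - z j)⁻¹ * ((∑ k ∈ t, (s - z k)⁻¹) - (s - z j)⁻¹)) := by
    intro j hj
    have hs' : ∀ k ∈ t.erase j, s ≠ z k := fun k hk => hs k (Finset.mem_of_mem_erase hk)
    have h1 : ∀ k ∈ t.erase j, ∏ l ∈ (t.erase j).erase k, (s - z l)
        = (qq z t s * (s - z j)⁻¹) * (s - z k)⁻¹ := by
      intro k hk
      have := prod_erase_eval (z := z) (t := t.erase j) hs' hk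
      rw [this]
      rw [show qq z (t.erase j) s = ∏ l ∈ t.erase j, (s - z l) from rfl,
        prod_erase_eval hs hj]
    rw [Finset.sum_congr rfl h1, ← Finset.mul_sum]
    have h2 : ∑ k ∈ t.erase j, (s - z k)⁻¹ = (∑ k ∈ t, (s - z k)⁻¹) - (s - z j)⁻¹ := by
      have := Finset.sum_erase_add t (fun k => (s - z k)⁻¹) hj
      linarith
    rw [h2]
    ring
  rw [qq2, Finset.sum_congr rfl hstep, ← Finset.mul_sum]
  congr 1
  have h3 : ∀ i ∈ t, (s - z i)⁻¹ * ((∑ k ∈ t, (s - z k)⁻¹) - (s - z i)⁻¹)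
      = (s - z i)⁻¹ * (∑ k ∈ t, (s - z k)⁻¹) - ((s - z i)⁻¹)^2 := fun i _ => by ring
  rw [Finset.sum_congr rfl h3, Finset.sum_sub_distrib, ← Finset.sum_mul, sq]

open Finset

lemma three_term {a b c : ℝ} (hab : a ≠ b) (hbc : b ≠ c) (hac : a ≠ c) :
    (a - b)⁻¹ * (a - c)⁻¹ + (b - c)⁻¹ * (b - a)⁻¹ + (c - a)⁻¹ * (c - b)⁻¹ = 0 := by
  have h1 : a - b ≠ 0 := sub_ne_zero.2 hab
  have h2 : b - c ≠ 0 := sub_ne_zero.2 hbc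
  have h3 : a - c ≠ 0 := sub_ne_zero.2 hac
  have h4 : b - a ≠ 0 := sub_ne_zero.2 hab.symm
  have h5 : c - a ≠ 0 := sub_ne_zero.2 hac.symm
  have h6 : c - b ≠ 0 := sub_ne_zero.2 hbc.symm
  field_simp
  ring

lemma key_identity {n : ℕ} (z : Fin n → ℝ) (hz : Function.Injective z) :
    ∑ j : Fin n, (∑ k ∈ univ.erase j, (z j - z k)⁻¹)^2
      = ∑ j : Fin n, ∑ k ∈ univ.erase j, ((z j - z k)⁻¹)^2 := by
  classical
  set Tri : Finset (Fin n × Fin n × Fin n) :=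
    univ.filter (fun w => w.1 ≠ w.2.1 ∧ w.2.1 ≠ w.2.2 ∧ w.1 ≠ w.2.2) with hTri
  set f : Fin n × Fin n × Fin n → ℝ := fun w => (z w.1 - z w.2.1)⁻¹ * (z w.1 - z w.2.2)⁻¹
    with hf
  have expand : ∀ j : Fin n, (∑ k ∈ univ.erase j, (z j - z k)⁻¹)^2
      = (∑ k ∈ univ.erase j, ((z j - z k)⁻¹)^2)
        + ∑ k ∈ univ.erase j, ∑ l ∈ (univ.erase j).erase k, f (j, k, l) := by
    intro j
    rw [sq, Finset.sum_mul_sum]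
    rw [← Finset.sum_add_distrib]
    refine Finset.sum_congr rfl fun k hk => ?_
    have := Finset.add_sum_erase (univ.erase j) (fun l => (z j - z k)⁻¹ * (z j - z l)⁻¹) hk
    rw [← this, sq, hf]
  rw [Finset.sum_congr rfl (fun j _ => expand j), Finset.sum_add_distrib]
  -- identify the cross term with the sum over Tri
  have hT : ∑ j : Fin n, ∑ k ∈ univ.erase j, ∑ l ∈ (univ.erase j).erase k, f (j, k, l)
      = ∑ w ∈ Tri, f w := by
    have e1 : ∀ j : Fin n, univ.erase j = univ.filter (fun k => ¬ j = k) := by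
      intro j; ext k; simp [eq_comm]
    have e2 : ∀ j k : Fin n, ((univ.filter (fun x => ¬ j = x)).erase k)
        = univ.filter (fun l => ¬ (j = l ∨ k = l)) := by
      intro j k; ext l; simp [eq_comm, and_comm, not_or]
    rw [hTri, Finset.sum_filter, Fintype.sum_prod_type]
    refine Finset.sum_congr rfl fun j _ => ?_
    rw [Fintype.sum_prod_type, e1, Finset.sum_filter]
    refine Finset.sum_congr rfl fun k _ => ?_
    by_cases hjk : j = k
    · simp [hjk]
    · rw [if_pos hjk, e2, Finset.sum_filter]
      refine Finset.sum_congr rfl fun l _ => ?_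
      by_cases h1 : j = l <;> by_cases h2 : k = l <;>
        simp [h1, h2, hjk, Ne, eq_comm] <;> tauto
  rw [hT]
  -- cyclic rotation
  set σ : Fin n × Fin n × Fin n → Fin n × Fin n × Fin n := fun w => (w.2.1, w.2.2, w.1)
    with hσ
  have hmem : ∀ w ∈ Tri, σ w ∈ Tri := by
    intro w hw
    simp only [hTri, Finset.mem_filter, Finset.mem_univ, true_and] at hw ⊢
    tauto
  have rot : ∀ g : Fin n × Fin n × Fin n → ℝ,
      ∑ w ∈ Tri, g w = ∑ w ∈ Tri, g (σ w) := by
    intro g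
    refine Finset.sum_nbij' (fun w => σ (σ w)) σ ?_ hmem ?_ ?_ ?_
    · intro w hw; exact hmem _ (hmem _ hw)
    · intro w _; rfl
    · intro w _; rfl
    · intro w _; rfl
  have hzero : ∀ w ∈ Tri, f w + f (σ w) + f (σ (σ w)) = 0 := by
    intro w hw
    simp only [hTri, Finset.mem_filter, Finset.mem_univ, true_and] at hw
    obtain ⟨h1, h2, h3⟩ := hw
    exact three_term (fun h => h1 (hz h)) (fun h => h2 (hz h)) (fun h => h3 (hz h))
  have h3T : (3 : ℝ) * ∑ w ∈ Tri, f w = 0 := by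
    have : (3 : ℝ) * ∑ w ∈ Tri, f w
        = ∑ w ∈ Tri, (f w + f (σ w) + f (σ (σ w))) := by
      rw [Finset.sum_add_distrib, Finset.sum_add_distrib, ← rot f, ← rot (fun w => f (σ w)),
        ← rot f]
      ring
    rw [this, Finset.sum_congr rfl hzero, Finset.sum_const, smul_zero]
  have : ∑ w ∈ Tri, f w = 0 := by linarith
  rw [this, add_zero]

noncomputable def Vand {n : ℕ} (z : Fin n → ℝ) : ℝ :=
  ∏ p ∈ Finset.univ.filter (fun p : Fin n × Fin n => p.1 < p.2), (z p.2 - z p.1)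

lemma vand_factor {n : ℕ} (z : Fin n → ℝ) (i : Fin n) :
    ∃ C : ℝ, ∀ s : ℝ, Vand (Function.update z i s) = C * qq z (univ.erase i) s := by
  classical
  set pr : Finset (Fin n × Fin n) := univ.filter (fun p : Fin n × Fin n => p.1 < p.2) with hpr
  refine ⟨(∏ j ∈ univ.erase i, (if i < j then (-1 : ℝ) else 1))
      * ∏ p ∈ pr.filter (fun p => ¬ (p.1 = i ∨ p.2 = i)), (z p.2 - z p.1), fun s => ?_⟩
  have split : Vand (Function.update z i s)
      = (∏ p ∈ pr.filter (fun p => p.1 = i ∨ p.2 = i),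
          (Function.update z i s p.2 - Function.update z i s p.1))
        * ∏ p ∈ pr.filter (fun p => ¬ (p.1 = i ∨ p.2 = i)),
          (Function.update z i s p.2 - Function.update z i s p.1) := by
    rw [Vand, ← Finset.prod_filter_mul_prod_filter_not pr (fun p => p.1 = i ∨ p.2 = i)]
  rw [split]
  have hconst : ∏ p ∈ pr.filter (fun p => ¬ (p.1 = i ∨ p.2 = i)),
      (Function.update z i s p.2 - Function.update z i s p.1)
      = ∏ p ∈ pr.filter (fun p => ¬ (p.1 = i ∨ p.2 = i)), (z p.2 - z p.1) := by
    refine Finset.prod_congr rfl fun p hp => ?_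
    simp only [Finset.mem_filter, not_or] at hp
    rw [Function.update_of_ne hp.2.2, Function.update_of_ne hp.2.1]
  have hmain : ∏ p ∈ pr.filter (fun p => p.1 = i ∨ p.2 = i),
      (Function.update z i s p.2 - Function.update z i s p.1)
      = ∏ j ∈ univ.erase i, ((if i < j then (-1 : ℝ) else 1) * (s - z j)) := by
    refine Finset.prod_nbij' (fun p => if p.1 = i then p.2 else p.1)
      (fun j => if i < j then (i, j) else (j, i)) ?_ ?_ ?_ ?_ ?_
    · rintro ⟨p1, p2⟩ hp
      simp only [hpr, Finset.mem_filter, Finset.mem_univ, true_and] at hp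
      obtain ⟨hlt, h⟩ := hp
      simp only at hlt h ⊢
      rcases h with h | h
      · subst h
        simp only [if_pos rfl]
        exact Finset.mem_erase.2 ⟨hlt.ne', Finset.mem_univ _⟩
      · subst h
        have h1 : ¬ p1 = p2 := hlt.ne
        simp only [if_neg h1]
        exact Finset.mem_erase.2 ⟨hlt.ne, Finset.mem_univ _⟩
    · intro j hj
      rw [Finset.mem_erase] at hj
      by_cases h : i < j
      · simp only [if_pos h, hpr, Finset.mem_filter, Finset.mem_univ, true_and]
        exact ⟨h, by tauto⟩
      · have hji : j < i := lt_of_le_of_ne (not_lt.1 h) hj.1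
        simp only [if_neg h, hpr, Finset.mem_filter, Finset.mem_univ, true_and]
        exact ⟨hji, by tauto⟩
    · rintro ⟨p1, p2⟩ hp
      simp only [hpr, Finset.mem_filter, Finset.mem_univ, true_and] at hp
      obtain ⟨hlt, h⟩ := hp
      simp only at hlt h ⊢
      rcases h with h | h
      · subst h
        simp [if_pos rfl, hlt]
      · subst h
        have h1 : ¬ p1 = p2 := hlt.ne
        have h2 : ¬ p2 < p1 := not_lt.2 hlt.le
        simp [h1, h2]
    · intro j hj
      rw [Finset.mem_erase] at hj
      by_cases h : i < j
      · simp [h]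
      · have hji : j < i := lt_of_le_of_ne (not_lt.1 h) hj.1
        simp [h, hji.ne]
    · rintro ⟨p1, p2⟩ hp
      simp only [hpr, Finset.mem_filter, Finset.mem_univ, true_and] at hp
      obtain ⟨hlt, h⟩ := hp
      simp only at hlt h ⊢
      rcases h with h | h
      · subst h
        have h2 : ¬ p2 = p1 := hlt.ne'
        rw [Function.update_self, Function.update_of_ne h2]
        simp [hlt]
      · subst h
        have h1 : ¬ p1 = p2 := hlt.ne
        have h2 : ¬ p2 < p1 := not_lt.2 hlt.le
        rw [Function.update_self, Function.update_of_ne h1]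
        simp [h1, h2]
  rw [hmain, hconst, Finset.prod_mul_distrib, qq]
  ring

lemma pd_def {n : ℕ} (i : Fin n) (F : (Fin n → ℝ) → ℝ) (z : Fin n → ℝ) :
    pd i F z = deriv (fun s => F (Function.update z i s)) (z i) := rfl

lemma pd_update {n : ℕ} (i : Fin n) (F : (Fin n → ℝ) → ℝ) (z : Fin n → ℝ) (s : ℝ) :
    pd i F (Function.update z i s) = deriv (fun t => F (Function.update z i t)) s := by
  rw [pd_def, Function.update_self]
  congr 1
  funext t
  rw [Function.update_idem]

lemma vand_ne_zero {n : ℕ} {z : Fin n → ℝ} (hz : Function.Injective z) : Vand z ≠ 0 := by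
  rw [Vand]
  refine Finset.prod_ne_zero_iff.2 fun p hp => ?_
  rw [Finset.mem_filter] at hp
  exact sub_ne_zero.2 fun h => hp.2.ne (hz h).symm

lemma coreX {n : ℕ} (z : Fin n → ℝ) (hz : Function.Injective z) (K : ℝ) (i : Fin n) :
    pd i (pd i (fun w => K * Vand w)) z
      = K * Vand z * ((∑ j ∈ univ.erase i, (z i - z j)⁻¹)^2
          - ∑ j ∈ univ.erase i, ((z i - z j)⁻¹)^2)
    ∧ pd i (fun w => (∑ i' ∈ univ \ {i}, 1 / (w i - w i')) * (K * Vand w)) z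
      = K * Vand z * ((∑ j ∈ univ.erase i, (z i - z j)⁻¹)^2
          - ∑ j ∈ univ.erase i, ((z i - z j)⁻¹)^2) := by
  classical
  obtain ⟨C, hC⟩ := vand_factor z i
  set t : Finset (Fin n) := univ.erase i with ht
  have hs0 : ∀ j ∈ t, z i ≠ z j := fun j hj h => (Finset.mem_erase.1 hj).1 (hz h).symm
  have hCq : C * qq z t (z i) = Vand z := by
    rw [← hC (z i), Function.update_eq_self]
  -- first partial derivative of K * Vand, along the i-th line
  have h1 : ∀ s : ℝ, pd i (fun w => K * Vand w) (Function.update z i s)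
      = K * (C * qq1 z t s) := by
    intro s
    rw [pd_update]
    have hfe : (fun u => (fun w => K * Vand w) (Function.update z i u))
        = fun u => K * (C * qq z t u) := funext fun u => by
          show K * Vand (Function.update z i u) = _
          rw [hC u]
    rw [hfe]
    exact (((hasDerivAt_qq z t s).const_mul C).const_mul K).deriv
  have key2 : pd i (pd i (fun w => K * Vand w)) z = K * (C * qq2 z t (z i)) := by
    rw [pd_def]
    have hfe : (fun s => pd i (fun w => K * Vand w) (Function.update z i s))
        = fun s => K * (C * qq1 z t s) := funext h1
    rw [hfe]
    exact (((hasDerivAt_qq1 z t (z i)).const_mul C).const_mul K).deriv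
  have hval : K * (C * qq2 z t (z i)) = K * Vand z *
      ((∑ j ∈ t, (z i - z j)⁻¹)^2 - ∑ j ∈ t, ((z i - z j)⁻¹)^2) := by
    rw [qq2_eval hs0]
    linear_combination (K * ((∑ j ∈ t, (z i - z j)⁻¹)^2
      - ∑ j ∈ t, ((z i - z j)⁻¹)^2)) * hCq
  refine ⟨key2.trans hval, ?_⟩
  -- drift term
  have hev : ∀ᶠ s in nhds (z i), ∀ j ∈ t, s ≠ z j := by
    rw [Filter.eventually_all_finset]
    exact fun j hj => eventually_ne_nhds (hs0 j hj)
  have heq : (fun s => (∑ i' ∈ univ \ {i},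
        1 / (Function.update z i s i - Function.update z i s i'))
          * (K * Vand (Function.update z i s)))
      =ᶠ[nhds (z i)] fun s => K * (C * qq1 z t s) := by
    filter_upwards [hev] with s hsj
    have hsum : ∑ i' ∈ univ \ {i}, 1 / (Function.update z i s i - Function.update z i s i')
        = ∑ j ∈ t, (s - z j)⁻¹ := by
      rw [Finset.sdiff_singleton_eq_erase, ← ht]
      refine Finset.sum_congr rfl fun j hj => ?_
      rw [Function.update_self, Function.update_of_ne (Finset.mem_erase.1 hj).1, one_div]
    rw [hC s, hsum, qq1_eval hsj]
    ring
  have : pd i (fun w => (∑ i' ∈ univ \ {i}, 1 / (w i - w i')) * (K * Vand w)) z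
      = K * (C * qq2 z t (z i)) := by
    rw [pd_def, heq.deriv_eq]
    exact (((hasDerivAt_qq1 z t (z i)).const_mul C).const_mul K).deriv
  exact this.trans hval

lemma coreY {n : ℕ} (z : Fin n → ℝ) (hz : Function.Injective z) (c : ℝ) (j : Fin n) :
    pd j (fun w => c * (Vand w)⁻¹) z
      = -(c * (Vand z)⁻¹ * (∑ k ∈ univ.erase j, (z j - z k)⁻¹))
    ∧ pd j (pd j (fun w => c * (Vand w)⁻¹)) z
      = c * (Vand z)⁻¹ * ((∑ k ∈ univ.erase j, (z j - z k)⁻¹)^2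
          + ∑ k ∈ univ.erase j, ((z j - z k)⁻¹)^2) := by
  classical
  obtain ⟨C, hC⟩ := vand_factor z j
  set t : Finset (Fin n) := univ.erase j with ht
  have hs0 : ∀ k ∈ t, z j ≠ z k := fun k hk h => (Finset.mem_erase.1 hk).1 (hz h).symm
  have hqz : qq z t (z j) ≠ 0 := qq_ne_zero hs0
  have hCq : C * qq z t (z j) = Vand z := by
    rw [← hC (z j), Function.update_eq_self]
  have hV : Vand z ≠ 0 := vand_ne_zero hz
  have hc0 : C ≠ 0 := fun h => hV (by rw [← hCq, h, zero_mul])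
  -- first partial derivative along the j-th line, where qq ≠ 0
  have h1 : ∀ s : ℝ, qq z t s ≠ 0 → pd j (fun w => c * (Vand w)⁻¹) (Function.update z j s)
      = c * (-(C * qq1 z t s) / (C * qq z t s)^2) := by
    intro s hsne
    rw [pd_update]
    have hfe : (fun u => (fun w => c * (Vand w)⁻¹) (Function.update z j u))
        = fun u => c * (C * qq z t u)⁻¹ := funext fun u => by
          show c * (Vand (Function.update z j u))⁻¹ = _
          rw [hC u]
    rw [hfe]
    exact ((((hasDerivAt_qq z t s).const_mul C).inv (mul_ne_zero hc0 hsne)).const_mul c).deriv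
  constructor
  · have h2 := h1 (z j) hqz
    rw [Function.update_eq_self] at h2
    rw [h2, qq1_eval hs0, ← hCq]
    field_simp
  · have hev : ∀ᶠ s in nhds (z j), qq z t s ≠ 0 :=
      (hasDerivAt_qq z t (z j)).continuousAt.eventually_ne hqz
    have heq : (fun s => pd j (fun w => c * (Vand w)⁻¹) (Function.update z j s))
        =ᶠ[nhds (z j)] fun s => c * (-(C * qq1 z t s) / (C * qq z t s)^2) := by
      filter_upwards [hev] with s hs using h1 s hs
    rw [pd_def, heq.deriv_eq]
    have hN : HasDerivAt (fun s => -(C * qq1 z t s)) (-(C * qq2 z t (z j))) (z j) :=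
      ((hasDerivAt_qq1 z t (z j)).const_mul C).neg
    have hD : HasDerivAt (fun s => (C * qq z t s)^2)
        ((2 : ℝ) * (C * qq z t (z j))^(2-1) * (C * qq1 z t (z j))) (z j) :=
      ((hasDerivAt_qq z t (z j)).const_mul C).pow 2
    have hDne : (C * qq z t (z j))^2 ≠ 0 := pow_ne_zero _ (mul_ne_zero hc0 hqz)
    have := ((hN.div hD hDne).const_mul c).deriv
    rw [show (fun s => c * (-(C * qq1 z t s) / (C * qq z t s) ^ 2))
      = (fun y => c * ((fun s => -(C * qq1 z t s)) / fun s => (C * qq z t s) ^ 2) y) from rfl,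
      this, qq1_eval hs0, qq2_eval hs0, ← hCq]
    field_simp
    ring

/-- The Dixon–Anderson kernel is annihilated both by the formal adjoint of the
`M`-dimensional Dyson Brownian motion generator (in `x`) and by the `(M+1)`-dimensional
Dyson Brownian motion generator (in `y`), pointwise on the open interlacing set. -/
theorem stmt_13 (M : ℕ) (hM : 1 ≤ M)
    (Λ : (Fin (M+1) → ℝ) → (Fin M → ℝ) → ℝ)
    (hΛ : ∀ (y : Fin (M+1) → ℝ) (x : Fin M → ℝ), Λ y x = (M.factorial : ℝ)
      * (∏ p ∈ Finset.univ.filter (fun p : Fin M × Fin M => p.1 < p.2),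
          (x p.2 - x p.1))
      * (∏ p ∈ Finset.univ.filter (fun p : Fin (M+1) × Fin (M+1) => p.1 < p.2),
          (y p.2 - y p.1))⁻¹)
    (bX : (Fin M → ℝ) → Fin M → ℝ)
    (hbX : ∀ (x : Fin M → ℝ) (i : Fin M),
      bX x i = ∑ i' ∈ Finset.univ \ {i}, 1 / (x i - x i'))
    (bY : (Fin (M+1) → ℝ) → Fin (M+1) → ℝ)
    (hbY : ∀ (y : Fin (M+1) → ℝ) (j : Fin (M+1)),
      bY y j = ∑ j' ∈ Finset.univ \ {j}, 1 / (y j - y j')) :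
    ∀ (y : Fin (M+1) → ℝ) (x : Fin M → ℝ), StrictMono y →
      (∀ i : Fin M, y i.castSucc < x i ∧ x i < y i.succ) →
      ((1/2) * (∑ i : Fin M, pd i (pd i (Λ y)) x)
          - (∑ i : Fin M, pd i (fun x' => bX x' i * Λ y x') x) = 0)
      ∧ ((1/2) * (∑ j : Fin (M+1), pd j (pd j (fun y' => Λ y' x)) y)
          + (∑ j : Fin (M+1), bY y j * pd j (fun y' => Λ y' x) y) = 0) := by
  intro y x hy hint
  have hyinj : Function.Injective y := hy.injective
  have hxmono : StrictMono x := by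
    intro i i' h
    have h1 : x i < y i.succ := (hint i).2
    have h2 : y i'.castSucc < x i' := (hint i').1
    have h3 : y i.succ ≤ y i'.castSucc := hy.monotone (by
      rw [Fin.le_def]
      simp only [Fin.val_succ, Fin.coe_castSucc]
      exact h)
    linarith
  have hxinj := hxmono.injective
  constructor
  · -- adjoint generator in x
    have hfunX : Λ y = fun w => ((M.factorial : ℝ) * (Vand y)⁻¹) * Vand w := by
      funext w
      rw [hΛ]
      simp only [Vand]
      ring
    have hdr : ∀ i : Fin M, (fun x' => bX x' i * Λ y x')
        = fun w => (∑ i' ∈ univ \ {i}, 1 / (w i - w i'))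
            * (((M.factorial : ℝ) * (Vand y)⁻¹) * Vand w) := by
      intro i
      funext w
      rw [hbX, hΛ]
      simp only [Vand]
      ring
    have hC := fun i : Fin M => coreX x hxinj ((M.factorial : ℝ) * (Vand y)⁻¹) i
    simp only [hdr]
    rw [hfunX]
    rw [Finset.sum_congr rfl (fun i (_ : i ∈ univ) => (hC i).1),
      Finset.sum_congr rfl (fun i (_ : i ∈ univ) => (hC i).2),
      ← Finset.mul_sum, Finset.sum_sub_distrib, key_identity x hxinj]
    ring
  · -- generator in y
    have hfunY : (fun y' => Λ y' x) = fun w => ((M.factorial : ℝ) * Vand x) * (Vand w)⁻¹ := by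
      funext w
      rw [hΛ]
      simp only [Vand]
    have hC := fun j : Fin (M+1) => coreY y hyinj ((M.factorial : ℝ) * Vand x) j
    have hbYe : ∀ j : Fin (M+1), bY y j = ∑ k ∈ univ.erase j, (y j - y k)⁻¹ := by
      intro j
      rw [hbY, Finset.sdiff_singleton_eq_erase]
      exact Finset.sum_congr rfl fun k _ => one_div _
    rw [hfunY]
    have h2 : ∀ j ∈ (univ : Finset (Fin (M+1))),
        bY y j * pd j (fun w => ((M.factorial : ℝ) * Vand x) * (Vand w)⁻¹) y
        = -(((M.factorial : ℝ) * Vand x * (Vand y)⁻¹)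
            * (∑ k ∈ univ.erase j, (y j - y k)⁻¹)^2) := by
      intro j _
      rw [(hC j).1, hbYe j]
      ring
    rw [Finset.sum_congr rfl h2,
      Finset.sum_congr rfl (fun j (_ : j ∈ univ) => (hC j).2),
      ← Finset.mul_sum, Finset.sum_add_distrib, key_identity y hyinj]
    simp only [Finset.sum_neg_distrib, ← Finset.mul_sum]
    rw [key_identity y hyinj]
    ring
end

section
/- The Vandermonde determinant h(x) = ∏_{1≤i<j≤M}(x_j − x_i) on ℝᴹ is a harmonic function: Δh = 0 everywhere on ℝᴹ. -/
open Real

namespace Stmt14Aux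

variable {M : ℕ}

/-- The set of strictly increasing pairs. -/
def S (M : ℕ) : Finset (Fin M × Fin M) :=
  Finset.univ.filter (fun p : Fin M × Fin M => p.1 < p.2)

/-- The linear factor attached to a pair. -/
def fpair (p : Fin M × Fin M) (x : Fin M → ℝ) : ℝ := x p.2 - x p.1

/-- Coefficient of the derivative of `fpair p` in direction `i`. -/
def cc (i : Fin M) (p : Fin M × Fin M) : ℝ :=
  (if p.2 = i then (1 : ℝ) else 0) - (if p.1 = i then (1 : ℝ) else 0)

/-- Sign. -/
def sg (i j : Fin M) : ℝ := if j < i then 1 else -1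

/-- The sorted pair on `{i, j}`. -/
def sp (i j : Fin M) : Fin M × Fin M := if j < i then (j, i) else (i, j)

lemma sp_comm (i j : Fin M) : sp i j = sp j i := by
  unfold sp
  rcases lt_trichotomy i j with hlt | heq | hgt
  · rw [if_neg (asymm hlt), if_pos hlt]
  · subst heq; rfl
  · rw [if_pos hgt, if_neg (asymm hgt)]

lemma sp_mem (i j : Fin M) (hij : i ≠ j) : sp i j ∈ S M := by
  unfold sp S
  by_cases hj : j < i
  · rw [if_pos hj]; simp [hj]
  · rw [if_neg hj]
    simp [lt_of_le_of_ne (not_lt.mp hj) hij]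

lemma sp_ne (a b c d : Fin M) (hca : c ≠ a) (hcb : c ≠ b) : sp a b ≠ sp c d := by
  unfold sp
  split_ifs <;> simp [Prod.ext_iff] <;> intro h1 h2 <;> simp_all

lemma cc_sp (i j : Fin M) (hij : j ≠ i) : cc i (sp i j) = sg i j := by
  unfold cc sp sg
  by_cases hj : j < i
  · rw [if_pos hj, if_pos hj]; simp [hij]
  · rw [if_neg hj, if_neg hj]; simp [hij]

lemma fpair_sp (i j : Fin M) (x : Fin M → ℝ) :
    fpair (sp i j) x = sg i j * (x i - x j) := by
  unfold fpair sp sg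
  by_cases hj : j < i
  · rw [if_pos hj, if_pos hj]; ring
  · rw [if_neg hj, if_neg hj]; ring

lemma sg_antisymm (i j : Fin M) (hij : j ≠ i) : sg j i = - sg i j := by
  unfold sg
  rcases lt_trichotomy i j with hlt | heq | hgt
  · rw [if_pos hlt, if_neg (asymm hlt)]; norm_num
  · exact absurd heq.symm hij
  · rw [if_neg (asymm hgt), if_pos hgt]

lemma factor_hasDeriv (x : Fin M → ℝ) (i : Fin M) (p : Fin M × Fin M) :
    HasDerivAt (fun s => fpair p (Function.update x i s)) (cc i p) (x i) := by
  have hfun : (fun s => fpair p (Function.update x i s)) =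
      fun s => (if p.2 = i then s else x p.2) - (if p.1 = i then s else x p.1) := by
    funext s
    unfold fpair
    rw [Function.update_apply, Function.update_apply]
  rw [hfun]
  unfold cc
  split_ifs with h1 h2 h2 <;>
    first
      | simpa using (hasDerivAt_id (x i)).fun_sub (hasDerivAt_id (x i))
      | simpa using (hasDerivAt_id (x i)).sub_const (x p.1)
      | simpa using (hasDerivAt_const (x i) (x p.2)).fun_sub (hasDerivAt_id (x i))
      | simpa using (hasDerivAt_const (x i) (x p.2)).fun_sub (hasDerivAt_const (x i) (x p.1))

lemma prod_hasDeriv (T : Finset (Fin M × Fin M)) (x : Fin M → ℝ) (i : Fin M) :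
    HasDerivAt (fun s => ∏ p ∈ T, fpair p (Function.update x i s))
      (∑ p ∈ T, cc i p * ∏ q ∈ T.erase p, fpair q x) (x i) := by
  have h := HasDerivAt.fun_finsetProd (u := T)
    (f := fun p s => fpair p (Function.update x i s))
    (f' := fun p => cc i p) (x := x i) (fun p _ => factor_hasDeriv x i p)
  have heq : (∑ p ∈ T, (∏ q ∈ T.erase p, fpair q (Function.update x i (x i))) • cc i p)
      = ∑ p ∈ T, cc i p * ∏ q ∈ T.erase p, fpair q x := by
    refine Finset.sum_congr rfl fun p _ => ?_
    rw [Function.update_eq_self, smul_eq_mul, mul_comm]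
  rw [heq] at h
  exact h

/-- value of one partial derivative of a product of factors. -/
lemma pd_prod (T : Finset (Fin M × Fin M)) (i : Fin M) (x : Fin M → ℝ) :
    pd i (fun y => ∏ p ∈ T, fpair p y) x
      = ∑ p ∈ T, cc i p * ∏ q ∈ T.erase p, fpair q x :=
  (prod_hasDeriv T x i).deriv

lemma pd_h (h : (Fin M → ℝ) → ℝ)
    (hh : ∀ x : Fin M → ℝ,
      h x = ∏ p ∈ Finset.univ.filter (fun p : Fin M × Fin M => p.1 < p.2), (x p.2 - x p.1))
    (i : Fin M) (x : Fin M → ℝ) :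
    pd i h x = ∑ p ∈ S M, cc i p * ∏ q ∈ (S M).erase p, fpair q x := by
  unfold pd
  have hfun : (fun s => h (Function.update x i s))
      = fun s => ∏ p ∈ S M, fpair p (Function.update x i s) := by
    funext s
    rw [hh]
    rfl
  rw [hfun]
  exact (prod_hasDeriv (S M) x i).deriv

lemma pd2_h (h : (Fin M → ℝ) → ℝ)
    (hh : ∀ x : Fin M → ℝ,
      h x = ∏ p ∈ Finset.univ.filter (fun p : Fin M × Fin M => p.1 < p.2), (x p.2 - x p.1))
    (i : Fin M) (x : Fin M → ℝ) :
    pd i (pd i h) x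
      = ∑ p ∈ S M, cc i p *
          ∑ q ∈ (S M).erase p, cc i q * ∏ r ∈ ((S M).erase p).erase q, fpair r x := by
  have hpd : pd i (pd i h) x
      = deriv (fun s => pd i h (Function.update x i s)) (x i) := rfl
  rw [hpd]
  have hfun : (fun s => pd i h (Function.update x i s))
      = fun s => ∑ p ∈ S M, cc i p * ∏ q ∈ (S M).erase p, fpair q (Function.update x i s) := by
    funext s
    exact pd_h h hh i (Function.update x i s)
  rw [hfun]
  have hd : HasDerivAt
      (fun s => ∑ p ∈ S M, cc i p * ∏ q ∈ (S M).erase p, fpair q (Function.update x i s))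
      (∑ p ∈ S M, cc i p *
        ∑ q ∈ (S M).erase p, cc i q * ∏ r ∈ ((S M).erase p).erase q, fpair r x) (x i) := by
    exact HasDerivAt.fun_sum fun p _ => (prod_hasDeriv ((S M).erase p) x i).const_mul (cc i p)
  exact hd.deriv

/-- Reindex a sum over pairs weighted by `cc i` as a sum over the second index. -/
lemma sum_pairs (i : Fin M) (G : Fin M × Fin M → ℝ) :
    ∑ p ∈ S M, cc i p * G p = ∑ j ∈ Finset.univ.erase i, sg i j * G (sp i j) := by
  have hfilter : ∑ p ∈ (S M).filter (fun p => p.1 = i ∨ p.2 = i), cc i p * G p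
      = ∑ p ∈ S M, cc i p * G p := by
    refine Finset.sum_filter_of_ne fun p _ hne => ?_
    by_contra hcon
    push_neg at hcon
    have : cc i p = 0 := by unfold cc; rw [if_neg hcon.2, if_neg hcon.1]; ring
    rw [this, zero_mul] at hne
    exact hne rfl
  rw [← hfilter]
  refine Finset.sum_nbij' (fun p => if p.1 = i then p.2 else p.1) (fun j => sp i j)
    ?_ ?_ ?_ ?_ ?_
  · intro p hp
    simp only [Finset.mem_filter, S, Finset.mem_univ, true_and] at hp
    obtain ⟨hlt, hor⟩ := hp
    by_cases h1 : p.1 = i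
    · rw [if_pos h1]
      simp only [Finset.mem_erase, Finset.mem_univ, and_true]
      exact fun hc => absurd (h1 ▸ hc ▸ hlt) (lt_irrefl _)
    · rw [if_neg h1]
      simp only [Finset.mem_erase, Finset.mem_univ, and_true]
      exact h1
  · intro j hj
    simp only [Finset.mem_erase, Finset.mem_univ, and_true] at hj
    refine Finset.mem_filter.mpr ⟨sp_mem i j (Ne.symm hj), ?_⟩
    unfold sp
    by_cases hlt : j < i
    · rw [if_pos hlt]; right; rfl
    · rw [if_neg hlt]; left; rfl
  · intro p hp
    simp only [Finset.mem_filter, S, Finset.mem_univ, true_and] at hp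
    obtain ⟨hlt, hor⟩ := hp
    by_cases h1 : p.1 = i
    · rw [if_pos h1]
      unfold sp
      rw [if_neg (by rw [← h1]; exact asymm hlt)]
      exact Prod.ext h1.symm rfl
    · rw [if_neg h1]
      have h2 : p.2 = i := hor.resolve_left h1
      unfold sp
      rw [if_pos (h2 ▸ hlt)]
      exact Prod.ext rfl h2.symm
  · intro j hj
    simp only [Finset.mem_erase, Finset.mem_univ, and_true] at hj
    unfold sp
    by_cases hlt : j < i
    · rw [if_pos hlt]
      simp [hj]
    · rw [if_neg hlt]; simp
  · intro p hp
    simp only [Finset.mem_filter, S, Finset.mem_univ, true_and] at hp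
    obtain ⟨hlt, hor⟩ := hp
    have hother : (if p.1 = i then p.2 else p.1) ≠ i := by
      by_cases h1 : p.1 = i
      · rw [if_pos h1]
        exact fun hc => absurd (h1 ▸ hc ▸ hlt) (lt_irrefl _)
      · rw [if_neg h1]; exact h1
    have hsp : sp i (if p.1 = i then p.2 else p.1) = p := by
      by_cases h1 : p.1 = i
      · rw [if_pos h1]
        unfold sp
        rw [if_neg (by rw [← h1]; exact asymm hlt)]
        exact Prod.ext h1.symm rfl
      · rw [if_neg h1]
        have h2 : p.2 = i := hor.resolve_left h1
        unfold sp
        rw [if_pos (h2 ▸ hlt)]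
        exact Prod.ext rfl h2.symm
    rw [← cc_sp i _ hother, hsp]

lemma sum_pairs_erase (i j : Fin M) (hji : j ≠ i) (G : Fin M × Fin M → ℝ) :
    ∑ q ∈ (S M).erase (sp i j), cc i q * G q
      = ∑ k ∈ (Finset.univ.erase i).erase j, sg i k * G (sp i k) := by
  have h1 := sum_pairs i G
  have hmem : sp i j ∈ S M := sp_mem i j (Ne.symm hji)
  have hjmem : j ∈ Finset.univ.erase i := by
    simp [Finset.mem_erase, hji]
  rw [← Finset.add_sum_erase _ _ hmem, ← Finset.add_sum_erase _ _ hjmem, cc_sp i j hji] at h1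
  linarith

/-- The summand over ordered triples. -/
noncomputable def TT (x : Fin M → ℝ) (t : Fin M × Fin M × Fin M) : ℝ :=
  if t.2.1 ≠ t.1 ∧ t.2.2 ≠ t.1 ∧ t.2.2 ≠ t.2.1 then
    sg t.1 t.2.1 * (sg t.1 t.2.2 *
      ∏ r ∈ ((S M).erase (sp t.1 t.2.1)).erase (sp t.1 t.2.2), fpair r x)
  else 0

lemma flatten (x : Fin M → ℝ) :
    ∑ i : Fin M, ∑ j ∈ Finset.univ.erase i, sg i j *
      ∑ k ∈ (Finset.univ.erase i).erase j, sg i k *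
        ∏ r ∈ ((S M).erase (sp i j)).erase (sp i k), fpair r x
    = ∑ t : Fin M × Fin M × Fin M, TT x t := by
  rw [Fintype.sum_prod_type]
  refine Finset.sum_congr rfl fun i _ => ?_
  rw [Fintype.sum_prod_type]
  rw [show Finset.univ.erase i = Finset.univ.filter (fun j => j ≠ i) from
    (Finset.filter_ne' _ _).symm, Finset.sum_filter]
  refine Finset.sum_congr rfl fun j _ => ?_
  by_cases hj : j ≠ i
  · rw [if_pos hj, Finset.mul_sum]
    rw [← Finset.filter_ne' (Finset.filter (fun k => k ≠ i) Finset.univ) j,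
      Finset.sum_filter, Finset.sum_filter]
    refine Finset.sum_congr rfl fun k _ => ?_
    unfold TT
    by_cases hki : k ≠ i
    · rw [if_pos hki]
      by_cases hkj : k ≠ j
      · rw [if_pos hkj, if_pos ⟨hj, hki, hkj⟩]
      · rw [if_neg hkj, if_neg (by tauto)]
    · rw [if_neg hki, if_neg (by tauto)]
  · rw [if_neg hj]
    symm
    refine Finset.sum_eq_zero fun k _ => ?_
    unfold TT
    rw [if_neg (by tauto)]

lemma key (x : Fin M → ℝ) (i j k : Fin M) (hji : j ≠ i) (hki : k ≠ i) (hkj : k ≠ j) :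
    sg i j * (sg i k * ∏ r ∈ ((S M).erase (sp i j)).erase (sp i k), fpair r x)
    + sg j k * (sg j i * ∏ r ∈ ((S M).erase (sp j k)).erase (sp j i), fpair r x)
    + sg k i * (sg k j * ∏ r ∈ ((S M).erase (sp k i)).erase (sp k j), fpair r x) = 0 := by
  rw [sp_comm j i, sp_comm k i, sp_comm k j]
  -- memberships
  have hm1 : sp j k ∈ ((S M).erase (sp i j)).erase (sp i k) := by
    refine Finset.mem_erase.mpr ⟨sp_ne j k i k (Ne.symm hji) (Ne.symm hki), ?_⟩
    exact Finset.mem_erase.mpr ⟨sp_ne j k i j (Ne.symm hji) (Ne.symm hki), sp_mem j k (Ne.symm hkj)⟩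
  have hm2 : sp i k ∈ ((S M).erase (sp j k)).erase (sp i j) := by
    refine Finset.mem_erase.mpr ⟨?_, ?_⟩
    · rw [sp_comm i k]
      exact Ne.symm (sp_ne i j k i hki hkj)
    · exact Finset.mem_erase.mpr ⟨Ne.symm (sp_ne j k i k (Ne.symm hji) (Ne.symm hki)),
        sp_mem i k (Ne.symm hki)⟩
  have hm3 : sp i j ∈ ((S M).erase (sp i k)).erase (sp j k) := by
    refine Finset.mem_erase.mpr ⟨Ne.symm (sp_ne j k i j (Ne.symm hji) (Ne.symm hki)), ?_⟩
    refine Finset.mem_erase.mpr ⟨?_, sp_mem i j (Ne.symm hji)⟩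
    rw [sp_comm i k]
    exact sp_ne i j k i hki hkj
  -- decompose the three products
  rw [← Finset.mul_prod_erase _ _ hm1, ← Finset.mul_prod_erase _ _ hm2,
    ← Finset.mul_prod_erase _ _ hm3]
  -- the three remaining index sets agree
  have hQ2 : (((S M).erase (sp j k)).erase (sp i j)).erase (sp i k)
      = (((S M).erase (sp i j)).erase (sp i k)).erase (sp j k) := by
    rw [Finset.erase_right_comm (s := S M) (a := sp j k) (b := sp i j),
      Finset.erase_right_comm (s := (S M).erase (sp i j))]
  have hQ3 : (((S M).erase (sp i k)).erase (sp j k)).erase (sp i j)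
      = (((S M).erase (sp i j)).erase (sp i k)).erase (sp j k) := by
    rw [Finset.erase_right_comm (s := (S M).erase (sp i k)),
      Finset.erase_right_comm (s := S M) (a := sp i k) (b := sp i j)]
  rw [hQ2, hQ3]
  rw [fpair_sp, fpair_sp, fpair_sp, sg_antisymm i j hji, sg_antisymm i k hki,
    sg_antisymm j k hkj]
  ring

theorem sum_TT (x : Fin M → ℝ) : ∑ t : Fin M × Fin M × Fin M, TT x t = 0 := by
  classical
  let e : Fin M × Fin M × Fin M ≃ Fin M × Fin M × Fin M :=
    ⟨fun t => (t.2.1, t.2.2, t.1), fun t => (t.2.2, t.1, t.2.1),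
      fun t => rfl, fun t => rfl⟩
  have h1 : ∑ t, TT x (e t) = ∑ t, TT x t := Equiv.sum_comp e (TT x)
  have h2 : ∑ t, TT x (e (e t)) = ∑ t, TT x (e t) :=
    Equiv.sum_comp e (fun u => TT x (e u))
  have h3 : ∑ t : Fin M × Fin M × Fin M, (TT x t + TT x (e t) + TT x (e (e t))) = 0 := by
    refine Finset.sum_eq_zero fun t _ => ?_
    obtain ⟨i, j, k⟩ := t
    show TT x (i, j, k) + TT x (j, k, i) + TT x (k, i, j) = 0
    by_cases hd : j ≠ i ∧ k ≠ i ∧ k ≠ j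
    · obtain ⟨hji, hki, hkj⟩ := hd
      unfold TT
      rw [if_pos ⟨hji, hki, hkj⟩, if_pos ⟨hkj, Ne.symm hji, Ne.symm hki⟩,
        if_pos ⟨Ne.symm hki, Ne.symm hkj, hji⟩]
      exact key x i j k hji hki hkj
    · unfold TT
      rw [if_neg (by tauto), if_neg (by simp only [ne_eq]; tauto),
        if_neg (by simp only [ne_eq]; tauto)]
      ring
  rw [Finset.sum_add_distrib, Finset.sum_add_distrib, h1, h2, h1] at h3
  linarith

end Stmt14Aux

open Stmt14Aux in
/-- The Vandermonde determinant is harmonic on `ℝᴹ`. -/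
theorem stmt_14 (M : ℕ) (h : (Fin M → ℝ) → ℝ)
    (hh : ∀ x : Fin M → ℝ,
      h x = ∏ p ∈ Finset.univ.filter (fun p : Fin M × Fin M => p.1 < p.2),
        (x p.2 - x p.1)) :
    ∀ x : Fin M → ℝ, ∑ i : Fin M, pd i (pd i h) x = 0 := by
  intro x
  have step1 : ∀ i : Fin M, pd i (pd i h) x
      = ∑ j ∈ Finset.univ.erase i, sg i j *
          ∑ k ∈ (Finset.univ.erase i).erase j, sg i k *
            ∏ r ∈ ((S M).erase (sp i j)).erase (sp i k), fpair r x := by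
    intro i
    rw [pd2_h h hh i x]
    rw [sum_pairs i (fun p => ∑ q ∈ (S M).erase p, cc i q *
      ∏ r ∈ ((S M).erase p).erase q, fpair r x)]
    refine Finset.sum_congr rfl fun j hj => ?_
    simp only [Finset.mem_erase, Finset.mem_univ, and_true] at hj
    rw [sum_pairs_erase i j hj (fun q => ∏ r ∈ ((S M).erase (sp i j)).erase q, fpair r x)]
  calc ∑ i : Fin M, pd i (pd i h) x
      = ∑ i : Fin M, ∑ j ∈ Finset.univ.erase i, sg i j *
          ∑ k ∈ (Finset.univ.erase i).erase j, sg i k *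
            ∏ r ∈ ((S M).erase (sp i j)).erase (sp i k), fpair r x :=
        Finset.sum_congr rfl fun i _ => step1 i
    _ = ∑ t : Fin M × Fin M × Fin M, TT x t := flatten x
    _ = 0 := sum_TT x
end
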